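/- Let (K,A,G) be a representation and let G act on the unfolding E(K,A,G) by (x,h)^g = (x,hg) on objects and (a,h)^g = (a,hg) on arrows. Then the orbit category E(K,A,G)/G of the unfolding with respect to this action is isomorphic to the original category K. -/

import Mathlib

set_option linter.unusedVariables false

/-- A small category, presented as a directed graph with a partial composition
that is defined exactly on composable pairs of arrows. -/
structure SmallCat where
  Obj : Type
  Arr : Type
  src : Arr → Obj
  tgt : Arr → Obj
  id : Obj → Arr
  src_id : ∀ x, src (id x) = x
  tgt_id : ∀ x, tgt (id x) = x
  comp : ∀ a b, tgt a = src b → Arr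
  src_comp : ∀ a b h, src (comp a b h) = src a
  tgt_comp : ∀ a b h, tgt (comp a b h) = tgt b
  id_comp : ∀ a, comp (id (src a)) a (tgt_id (src a)) = a
  comp_id : ∀ a, comp a (id (tgt a)) ((src_id (tgt a)).symm) = a
  assoc : ∀ a b c (hab : tgt a = src b) (hbc : tgt b = src c),
    comp (comp a b hab) c (by rw [tgt_comp]; exact hbc) =
    comp a (comp b c hbc) (by rw [src_comp]; exact hab)

/-- An action of a group `G` on a small category `K` by category automorphisms,
written exponentially (left-associative: `a^(g*h) = (a^g)^h`). -/
structure CatAction (G : Type) [Group G] (K : SmallCat) where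
  onObj : G → K.Obj → K.Obj
  onArr : G → K.Arr → K.Arr
  onObj_one : ∀ x, onObj 1 x = x
  onObj_mul : ∀ g h x, onObj (g * h) x = onObj h (onObj g x)
  onArr_one : ∀ a, onArr 1 a = a
  onArr_mul : ∀ g h a, onArr (g * h) a = onArr h (onArr g a)
  src_onArr : ∀ g a, K.src (onArr g a) = onObj g (K.src a)
  tgt_onArr : ∀ g a, K.tgt (onArr g a) = onObj g (K.tgt a)
  onArr_id : ∀ g x, onArr g (K.id x) = K.id (onObj g x)
  onArr_comp : ∀ g a b (h : K.tgt a = K.src b),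
    onArr g (K.comp a b h) = K.comp (onArr g a) (onArr g b)
      (by rw [tgt_onArr, src_onArr, h])

/-- The action is semi-regular: only the unit fixes an object or an arrow. -/
def SemiRegular {G : Type} [Group G] {K : SmallCat} (ρ : CatAction G K) : Prop :=
  (∀ g x, ρ.onObj g x = x → g = 1) ∧ (∀ g a, ρ.onArr g a = a → g = 1)

/-- Orbit of an object. -/
def orbitO {G : Type} [Group G] {K : SmallCat} (ρ : CatAction G K) (x : K.Obj) : Set K.Obj :=
  {y | ∃ g : G, ρ.onObj g x = y}

/-- The arrows of the full subcategory generated by the orbit of `x`. -/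
def orbitA {G : Type} [Group G] {K : SmallCat} (ρ : CatAction G K) (x : K.Obj) : Set K.Arr :=
  {a | K.src a ∈ orbitO ρ x ∧ K.tgt a ∈ orbitO ρ x}

/-- The setoid of object orbits. -/
def objSetoid {G : Type} [Group G] {K : SmallCat} (ρ : CatAction G K) : Setoid K.Obj where
  r x y := ∃ g : G, ρ.onObj g x = y
  iseqv := by
    constructor
    · exact fun x => ⟨1, ρ.onObj_one x⟩
    · rintro x y ⟨g, rfl⟩
      exact ⟨g⁻¹, by rw [← ρ.onObj_mul, mul_inv_cancel, ρ.onObj_one]⟩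
    · rintro x y z ⟨g, rfl⟩ ⟨h, rfl⟩
      exact ⟨g * h, by rw [ρ.onObj_mul]⟩

/-- The setoid of arrow orbits. -/
def arrSetoid {G : Type} [Group G] {K : SmallCat} (ρ : CatAction G K) : Setoid K.Arr where
  r a b := ∃ g : G, ρ.onArr g a = b
  iseqv := by
    constructor
    · exact fun a => ⟨1, ρ.onArr_one a⟩
    · rintro a b ⟨g, rfl⟩
      exact ⟨g⁻¹, by rw [← ρ.onArr_mul, mul_inv_cancel, ρ.onArr_one]⟩
    · rintro a b c ⟨g, rfl⟩ ⟨h, rfl⟩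
      exact ⟨g * h, by rw [ρ.onArr_mul]⟩

/-- The source of an arrow orbit. -/
def srcQ {G : Type} [Group G] {K : SmallCat} (ρ : CatAction G K) :
    Quotient (arrSetoid ρ) → Quotient (objSetoid ρ) :=
  Quotient.lift (fun a => Quotient.mk (objSetoid ρ) (K.src a)) (by
    rintro a b ⟨g, rfl⟩
    exact Quotient.sound ⟨g, (ρ.src_onArr g a).symm⟩)

/-- The target of an arrow orbit. -/
def tgtQ {G : Type} [Group G] {K : SmallCat} (ρ : CatAction G K) :
    Quotient (arrSetoid ρ) → Quotient (objSetoid ρ) :=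
  Quotient.lift (fun a => Quotient.mk (objSetoid ρ) (K.tgt a)) (by
    rintro a b ⟨g, rfl⟩
    exact Quotient.sound ⟨g, (ρ.tgt_onArr g a).symm⟩)

/-- The identity arrow orbit of an object orbit. -/
def idQ {G : Type} [Group G] {K : SmallCat} (ρ : CatAction G K) :
    Quotient (objSetoid ρ) → Quotient (arrSetoid ρ) :=
  Quotient.lift (fun x => Quotient.mk (arrSetoid ρ) (K.id x)) (by
    rintro x y ⟨g, rfl⟩
    exact Quotient.sound ⟨g, ρ.onArr_id g x⟩)

/-- `CompRelQ ρ α β γ` expresses that in the orbit category the composite of the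
arrow orbits `α` and `β` is `γ`, i.e. that `γ` is the orbit of a composite of
composable representatives of `α` and `β`. -/
def CompRelQ {G : Type} [Group G] {K : SmallCat} (ρ : CatAction G K)
    (α β γ : Quotient (arrSetoid ρ)) : Prop :=
  ∃ (a b : K.Arr) (h : K.tgt a = K.src b),
    Quotient.mk (arrSetoid ρ) a = α ∧ Quotient.mk (arrSetoid ρ) b = β ∧
    Quotient.mk (arrSetoid ρ) (K.comp a b h) = γ

/-- An annotation: a contravariant homomorphism from a small category into a group. -/
structure Annotation (K : SmallCat) (G : Type) [Group G] where
  map : K.Arr → G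
  map_id : ∀ x, map (K.id x) = 1
  map_comp : ∀ a b (h : K.tgt a = K.src b), map (K.comp a b h) = map b * map a

/-- The partial operation `⊙` of a representation `(K, A, G)`. -/
def odot {G : Type} [Group G] {K : SmallCat} (A : Annotation K G) (p q : K.Arr × G)
    (h : K.tgt p.1 = K.src q.1) (_ : q.2 = A.map p.1 * p.2) : K.Arr × G :=
  (K.comp p.1 q.1 h, p.2)

/-- The unfolding `E(K,A,G)` of a representation `(K,A,G)`. -/
def Unfolding (K : SmallCat) {G : Type} [Group G] (A : Annotation K G) : SmallCat where
  Obj := K.Obj × G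
  Arr := K.Arr × G
  src p := (K.src p.1, p.2)
  tgt p := (K.tgt p.1, A.map p.1 * p.2)
  id x := (K.id x.1, x.2)
  src_id x := by simp [K.src_id]
  tgt_id x := by simp [K.tgt_id, A.map_id]
  comp p q h := (K.comp p.1 q.1 (congrArg Prod.fst h), p.2)
  src_comp p q h := by simp [K.src_comp]
  tgt_comp p q h := by
    have h2 : A.map p.1 * p.2 = q.2 := congrArg Prod.snd h
    simp [K.tgt_comp, A.map_comp, mul_assoc, h2]
  id_comp p := by
    refine Prod.ext ?_ rfl
    exact K.id_comp p.1
  comp_id p := by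
    refine Prod.ext ?_ rfl
    exact K.comp_id p.1
  assoc p q s hpq hqs := by
    refine Prod.ext ?_ rfl
    exact K.assoc p.1 q.1 s.1 (congrArg Prod.fst hpq) (congrArg Prod.fst hqs)

/-- A homomorphism (functor) between small categories. -/
structure CatHom (K L : SmallCat) where
  onObj : K.Obj → L.Obj
  onArr : K.Arr → L.Arr
  src_onArr : ∀ a, L.src (onArr a) = onObj (K.src a)
  tgt_onArr : ∀ a, L.tgt (onArr a) = onObj (K.tgt a)
  onArr_id : ∀ x, onArr (K.id x) = L.id (onObj x)
  onArr_comp : ∀ a b (h : K.tgt a = K.src b),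
    onArr (K.comp a b h) = L.comp (onArr a) (onArr b)
      (by rw [tgt_onArr, src_onArr, h])

/-- A functor is full. -/
def IsFull {K L : SmallCat} (F : CatHom K L) : Prop :=
  ∀ (x y : K.Obj) (b : L.Arr), L.src b = F.onObj x → L.tgt b = F.onObj y →
    ∃ a : K.Arr, K.src a = x ∧ K.tgt a = y ∧ F.onArr a = b

/-- A functor is faithful. -/
def IsFaithful {K L : SmallCat} (F : CatHom K L) : Prop :=
  ∀ a a' : K.Arr, K.src a = K.src a' → K.tgt a = K.tgt a' → F.onArr a = F.onArr a' → a = a'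

/-- A translative automorphism group action: semi-regular, and any two orbits
generate isomorphic full subcategories, by an isomorphism commuting with the action. -/
def Translative {G : Type} [Group G] {K : SmallCat} (ρ : CatAction G K) : Prop :=
  SemiRegular ρ ∧
  ∀ a b : K.Obj, ∃ (φo : K.Obj → K.Obj) (φa : K.Arr → K.Arr),
    Set.BijOn φo (orbitO ρ a) (orbitO ρ b) ∧
    Set.BijOn φa (orbitA ρ a) (orbitA ρ b) ∧
    (∀ f ∈ orbitA ρ a, K.src (φa f) = φo (K.src f)) ∧
    (∀ f ∈ orbitA ρ a, K.tgt (φa f) = φo (K.tgt f)) ∧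
    (∀ x ∈ orbitO ρ a, φa (K.id x) = K.id (φo x)) ∧
    (∀ (f f' : K.Arr) (h : K.tgt f = K.src f'), f ∈ orbitA ρ a → f' ∈ orbitA ρ a →
      ∀ h', φa (K.comp f f' h) = K.comp (φa f) (φa f') h') ∧
    (∀ (g : G), ∀ x ∈ orbitO ρ a, φo (ρ.onObj g x) = ρ.onObj g (φo x)) ∧
    (∀ (g : G), ∀ f ∈ orbitA ρ a, φa (ρ.onArr g f) = ρ.onArr g (φa f))

/-- `T` is a transversal of the object orbits. -/
def IsTransversal {G : Type} [Group G] {K : SmallCat} (ρ : CatAction G K)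
    (T : Set K.Obj) : Prop :=
  ∀ x : K.Obj, ∃! t, t ∈ T ∧ t ∈ orbitO ρ x

/-- The natural annotation associated with the canonical automorphisms `gT`. -/
def natAnn {G : Type} [Group G] {K : SmallCat} (ρ : CatAction G K)
    (gT : K.Obj → G) (a : K.Arr) : G :=
  gT (K.tgt a) * (gT (K.src a))⁻¹

/-- `RightNormalWith ρ C` : the map `C` witnesses that `ρ` is right-normal:
in the orbit category, loop orbits can be moved from the left of an arrow orbit
to its right. -/
def RightNormalWith {G : Type} [Group G] {K : SmallCat} (ρ : CatAction G K)
    (C : Quotient (arrSetoid ρ) → Quotient (arrSetoid ρ) → Quotient (arrSetoid ρ)) : Prop :=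
  (∀ (a x : K.Arr),
    srcQ ρ (Quotient.mk (arrSetoid ρ) x) = srcQ ρ (Quotient.mk (arrSetoid ρ) a) →
    tgtQ ρ (Quotient.mk (arrSetoid ρ) x) = srcQ ρ (Quotient.mk (arrSetoid ρ) a) →
    ((srcQ ρ (C (Quotient.mk (arrSetoid ρ) a) (Quotient.mk (arrSetoid ρ) x)) =
        tgtQ ρ (Quotient.mk (arrSetoid ρ) a) ∧
      tgtQ ρ (C (Quotient.mk (arrSetoid ρ) a) (Quotient.mk (arrSetoid ρ) x)) =
        tgtQ ρ (Quotient.mk (arrSetoid ρ) a)) ∧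
      (∀ (x' a' : K.Arr) (h1 : K.tgt x' = K.src a'),
        Quotient.mk (arrSetoid ρ) x' = Quotient.mk (arrSetoid ρ) x →
        Quotient.mk (arrSetoid ρ) a' = Quotient.mk (arrSetoid ρ) a →
        ∀ (a'' c : K.Arr) (h2 : K.tgt a'' = K.src c),
          Quotient.mk (arrSetoid ρ) a'' = Quotient.mk (arrSetoid ρ) a →
          Quotient.mk (arrSetoid ρ) c =
            C (Quotient.mk (arrSetoid ρ) a) (Quotient.mk (arrSetoid ρ) x) →
          Quotient.mk (arrSetoid ρ) (K.comp x' a' h1) =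
            Quotient.mk (arrSetoid ρ) (K.comp a'' c h2)))) ∧
  (∀ a : K.Arr,
    C (Quotient.mk (arrSetoid ρ) a) (Quotient.mk (arrSetoid ρ) (K.id (K.src a))) =
      Quotient.mk (arrSetoid ρ) (K.id (K.tgt a)))

/-- The action `ρ` is right-normal. -/
def RightNormal {G : Type} [Group G] {K : SmallCat} (ρ : CatAction G K) : Prop :=
  ∃ C, RightNormalWith ρ C

/-- An arrow orbit is an identity orbit. -/
def IsIdQ {G : Type} [Group G] {K : SmallCat} (ρ : CatAction G K)
    (α : Quotient (arrSetoid ρ)) : Prop :=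
  ∃ x : K.Obj, α = Quotient.mk (arrSetoid ρ) (K.id x)

/-- An arrow of the orbit category is reducible: it is an arrow with the same
endpoints followed by a non-identity loop. -/
def ReducibleQ {G : Type} [Group G] {K : SmallCat} (ρ : CatAction G K)
    (β : Quotient (arrSetoid ρ)) : Prop :=
  ∃ b l, CompRelQ ρ b l β ∧ tgtQ ρ b = tgtQ ρ β ∧ ¬ IsIdQ ρ l

/-- An arrow of the orbit category is irreducible. -/
def IrreducibleQ {G : Type} [Group G] {K : SmallCat} (ρ : CatAction G K)
    (β : Quotient (arrSetoid ρ)) : Prop :=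
  ¬ ReducibleQ ρ β

/-- The orbit category is uniquely representable by irreducible arrows,
with irreducible part `r` and loop part `n`. -/
def UniqRep {G : Type} [Group G] {K : SmallCat} (ρ : CatAction G K)
    (r n : Quotient (arrSetoid ρ) → Quotient (arrSetoid ρ)) : Prop :=
  (∀ α, IrreducibleQ ρ (r α) ∧ srcQ ρ (r α) = srcQ ρ α ∧ tgtQ ρ (r α) = tgtQ ρ α ∧
    srcQ ρ (n α) = tgtQ ρ α ∧ tgtQ ρ (n α) = tgtQ ρ α ∧ CompRelQ ρ (r α) (n α) α) ∧
  (∀ α b l, CompRelQ ρ b l α → tgtQ ρ b = tgtQ ρ α → srcQ ρ l = tgtQ ρ l →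
    IrreducibleQ ρ b → b = r α ∧ l = n α)

/-- A right-groupal category: a small category whose objects form a group which
acts on the category by a left-associative automorphism action, compatible with
right multiplication on the objects. -/
structure RGC where
  K : SmallCat
  mul : K.Obj → K.Obj → K.Obj
  one : K.Obj
  inv : K.Obj → K.Obj
  mul_assoc : ∀ x y z, mul (mul x y) z = mul x (mul y z)
  one_mul : ∀ x, mul one x = x
  mul_one : ∀ x, mul x one = x
  inv_mul : ∀ x, mul (inv x) x = one
  mul_inv : ∀ x, mul x (inv x) = one
  act : K.Arr → K.Obj → K.Arr
  act_one : ∀ a, act a one = a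
  act_mul : ∀ a x y, act (act a x) y = act a (mul x y)
  src_act : ∀ a x, K.src (act a x) = mul (K.src a) x
  tgt_act : ∀ a x, K.tgt (act a x) = mul (K.tgt a) x
  act_id : ∀ y x, act (K.id y) x = K.id (mul y x)
  act_comp : ∀ a b (h : K.tgt a = K.src b) x,
    act (K.comp a b h) x = K.comp (act a x) (act b x) (by rw [tgt_act, src_act, h])

/-- A groupal category: a right-groupal category together with a commuting
second (left-multiplication style) action satisfying the interchange law. -/
structure GroupalCat extends RGC where
  lact : K.Obj → K.Arr → K.Arr
  lact_one : ∀ a, lact one a = a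
  lact_mul : ∀ x y a, lact x (lact y a) = lact (mul x y) a
  src_lact : ∀ x a, K.src (lact x a) = mul x (K.src a)
  tgt_lact : ∀ x a, K.tgt (lact x a) = mul x (K.tgt a)
  lact_id : ∀ x y, lact x (K.id y) = K.id (mul x y)
  lact_comp : ∀ x a b (h : K.tgt a = K.src b),
    lact x (K.comp a b h) = K.comp (lact x a) (lact x b) (by rw [tgt_lact, src_lact, h])
  lact_act : ∀ x a y, lact x (act a y) = act (lact x a) y
  interchange : ∀ (a b : K.Arr),
    K.comp (act a (K.src b)) (lact (K.tgt a) b) (by rw [tgt_act, src_lact]) =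
    K.comp (lact (K.src a) b) (act a (K.tgt b)) (by rw [tgt_lact, src_act])

/-- A po-group `P`, viewed as the simple category with a unique arrow `x → y` iff `x ≤ y`. -/
def poCat (P : Type) [Group P] [PartialOrder P] : SmallCat where
  Obj := P
  Arr := {p : P × P // p.1 ≤ p.2}
  src p := p.1.1
  tgt p := p.1.2
  id x := ⟨(x, x), le_refl x⟩
  src_id x := rfl
  tgt_id x := rfl
  comp a b h := ⟨(a.1.1, b.1.2), a.2.trans ((show (a.1).2 = (b.1).1 from h).trans_le b.2)⟩
  src_comp a b h := rfl
  tgt_comp a b h := rfl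
  id_comp a := rfl
  comp_id a := rfl
  assoc a b c hab hbc := rfl

/-- For a representation `(K,A,G)` with `G` acting on the
unfolding `E(K,A,G)` by `(x,h)^g = (x,hg)`, `(a,h)^g = (a,hg)`, the orbit
category `E(K,A,G)/G` is isomorphic to the original category `K`. -/
theorem orbit_category_of_unfolding_iso {G : Type} [Group G] (K : SmallCat)
    (A : Annotation K G) (ρ : CatAction G (Unfolding K A))
    (hO : ∀ (g : G) (p : K.Obj × G), ρ.onObj g p = (p.1, p.2 * g))
    (hA : ∀ (g : G) (p : K.Arr × G), ρ.onArr g p = (p.1, p.2 * g)) :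
    ∃ (Fo : Quotient (objSetoid ρ) → K.Obj) (Fa : Quotient (arrSetoid ρ) → K.Arr),
      (∀ p : K.Obj × G, Fo (Quotient.mk (objSetoid ρ) p) = p.1) ∧
      (∀ a : K.Arr × G, Fa (Quotient.mk (arrSetoid ρ) a) = a.1) ∧
      Function.Bijective Fo ∧ Function.Bijective Fa ∧
      (∀ α, K.src (Fa α) = Fo (srcQ ρ α)) ∧
      (∀ α, K.tgt (Fa α) = Fo (tgtQ ρ α)) ∧
      (∀ ω, Fa (idQ ρ ω) = K.id (Fo ω)) ∧
      (∀ (a b : K.Arr × G) (h : (Unfolding K A).tgt a = (Unfolding K A).src b)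
          (h' : K.tgt (Fa (Quotient.mk (arrSetoid ρ) a)) =
            K.src (Fa (Quotient.mk (arrSetoid ρ) b))),
        Fa (Quotient.mk (arrSetoid ρ) ((Unfolding K A).comp a b h)) =
          K.comp (Fa (Quotient.mk (arrSetoid ρ) a)) (Fa (Quotient.mk (arrSetoid ρ) b)) h') := by
  refine ⟨Quotient.lift (fun p => p.1) ?_, Quotient.lift (fun a => a.1) ?_,
    fun p => rfl, fun a => rfl, ?_, ?_, ?_, ?_, ?_, ?_⟩
  · rintro p q ⟨g, rfl⟩; rw [hO g p]
  · rintro a b ⟨g, rfl⟩; rw [hA g a]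
  · constructor
    · intro α β
      induction α using Quotient.ind
      induction β using Quotient.ind
      rename_i p q
      intro h
      dsimp at h
      refine Quotient.sound ⟨p.2⁻¹ * q.2, ?_⟩
      rw [hO (p.2⁻¹ * q.2) p]
      exact Prod.ext h (by group)
    · intro x; exact ⟨Quotient.mk _ (x, 1), rfl⟩
  · constructor
    · intro α β
      induction α using Quotient.ind
      induction β using Quotient.ind
      rename_i p q
      intro h
      dsimp at h
      refine Quotient.sound ⟨p.2⁻¹ * q.2, ?_⟩
      rw [hA (p.2⁻¹ * q.2) p]
      exact Prod.ext h (by group)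
    · intro x; exact ⟨Quotient.mk _ (x, 1), rfl⟩
  · intro α; induction α using Quotient.ind; rfl
  · intro α; induction α using Quotient.ind; rfl
  · intro ω; induction ω using Quotient.ind; rfl
  · intro a b h h'
    dsimp [Unfolding]
    rfl
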